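/- Let p be a prime, N ≥ 1, ξ = exp(2πi/p), and let S be a commutative subgroup of ℰ = { ξ^k E_{v,w} } containing the center 𝒵 = { ξ^k I }, with #S = p^{r+1}. Let χ : S → ℂˣ be a group homomorphism with χ(ξ·I) = ξ. Then the joint eigenspace Q_{S,χ} = { ψ ∈ ℂ^{p^N} : A ψ = χ(A) ψ for all A ∈ S } is a ℂ-linear subspace of dimension exactly p^{N−r}. -/

import Mathlib

open Matrix Complex

/-- `ξ = exp(2πi/p)`. -/
noncomputable def xi (p : ℕ) : ℂ := Complex.exp (2 * Real.pi * Complex.I / p)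

/-- The cyclic shift matrix `T`, with `T_{i,j} = 1` iff `j = i + 1` in `ℤ/pℤ`. -/
def Tmat (p : ℕ) : Matrix (ZMod p) (ZMod p) ℂ :=
  Matrix.of fun i j => if j = i + 1 then 1 else 0

/-- The diagonal matrix `R = diag(1, ξ, ξ², …, ξ^{p-1})`. -/
noncomputable def Rmat (p : ℕ) : Matrix (ZMod p) (ZMod p) ℂ :=
  Matrix.diagonal fun i => xi p ^ i.val

/-- `E_{v,w} = (T^{v_1} R^{w_1}) ⊗ ⋯ ⊗ (T^{v_N} R^{w_N})`, the iterated Kronecker product,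
realized as a matrix indexed by `(ℤ/pℤ)^N`. -/
noncomputable def Emat (p N : ℕ) [NeZero p] (v w : Fin N → ZMod p) :
    Matrix (Fin N → ZMod p) (Fin N → ZMod p) ℂ :=
  Matrix.of fun x y => ∏ i, (Tmat p ^ (v i).val * Rmat p ^ (w i).val) (x i) (y i)

/-- The pairing `⟨v,w⟩ = Σ_i v_i w_i ∈ ℤ/pℤ`. -/
def inn (p N : ℕ) (v w : Fin N → ZMod p) : ZMod p := ∑ i, v i * w i

/-- The set `ℰ = { ξ^k E_{v,w} }` of matrices. -/
noncomputable def ESet (p N : ℕ) [NeZero p] :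
    Set (Matrix (Fin N → ZMod p) (Fin N → ZMod p) ℂ) :=
  {A | ∃ (k : ZMod p) (v w : Fin N → ZMod p), A = xi p ^ k.val • Emat p N v w}

/-- The set `𝒵 = { ξ^k · I }` of scalar matrices. -/
noncomputable def ZSet (p N : ℕ) :
    Set (Matrix (Fin N → ZMod p) (Fin N → ZMod p) ℂ) :=
  {A | ∃ k : ZMod p,
    A = xi p ^ k.val • (1 : Matrix (Fin N → ZMod p) (Fin N → ZMod p) ℂ)}

lemma xi_prim (p : ℕ) [NeZero p] : IsPrimitiveRoot (xi p) p :=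
  Complex.isPrimitiveRoot_exp p (NeZero.ne p)

lemma xi_ne_zero (p : ℕ) : xi p ≠ 0 := Complex.exp_ne_zero _

lemma Tmat_pow_apply (p : ℕ) [NeZero p] (a : ℕ) (i j : ZMod p) :
    (Tmat p ^ a) i j = if j = i + (a : ZMod p) then 1 else 0 := by
  induction a generalizing j with
  | zero => simp [Matrix.one_apply, eq_comm]
  | succ a ih =>
    rw [pow_succ, Matrix.mul_apply]
    have h : ∀ y : ZMod p, (Tmat p ^ a) i y * Tmat p y j
        = if y = i + (a : ZMod p) then (if j = y + 1 then 1 else 0) else 0 := by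
      intro y
      rw [ih]
      by_cases hy : y = i + (a : ZMod p) <;> simp [hy, Tmat]
    simp_rw [h]
    rw [Finset.sum_ite_eq' Finset.univ (i + (a : ZMod p))]
    simp [add_assoc]

lemma sum_val_pow (p : ℕ) [NeZero p] (z : ℂ) :
    ∑ x : ZMod p, z ^ x.val = ∑ j ∈ Finset.range p, z ^ j := by
  refine Finset.sum_nbij' (fun x : ZMod p => x.val) (fun j => (j : ZMod p)) ?_ ?_ ?_ ?_ ?_
  · intro x _; exact Finset.mem_range.mpr (ZMod.val_lt x)
  · intro j _; exact Finset.mem_univ _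
  · intro x _; exact ZMod.natCast_rightInverse x
  · intro j hj; exact ZMod.val_cast_of_lt (Finset.mem_range.mp hj)
  · intro x _; rfl

lemma trace_TR (p : ℕ) [NeZero p] (a b : ℕ) (ha : a < p) (hb : b < p) :
    (Tmat p ^ a * Rmat p ^ b).trace = if a = 0 ∧ b = 0 then (p : ℂ) else 0 := by
  have hdiag : Rmat p ^ b = Matrix.diagonal fun i : ZMod p => (xi p ^ b) ^ i.val := by
    rw [Rmat, Matrix.diagonal_pow]
    have h : ((fun i : ZMod p => xi p ^ i.val) ^ b) = fun i : ZMod p => (xi p ^ b) ^ i.val := by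
      funext i; simp [← pow_mul, Nat.mul_comm]
    rw [h]
  have hentry : ∀ x : ZMod p, (Tmat p ^ a * Rmat p ^ b) x x
      = if a = 0 then (xi p ^ b) ^ x.val else 0 := by
    intro x
    rw [hdiag, Matrix.mul_diagonal, Tmat_pow_apply]
    by_cases ha0 : a = 0
    · simp [ha0]
    · have hx : x ≠ x + (a : ZMod p) := by
        intro h
        rw [left_eq_add, ZMod.natCast_eq_zero_iff] at h
        exact ha0 (Nat.eq_zero_of_dvd_of_lt h ha)
      rw [if_neg hx, zero_mul, if_neg ha0]
  rw [Matrix.trace]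
  simp_rw [Matrix.diag, hentry]
  by_cases ha0 : a = 0
  · simp only [ha0, if_true, true_and]
    rw [sum_val_pow]
    by_cases hb0 : b = 0
    · simp [hb0]
    · have hne1 : xi p ^ b ≠ 1 := by
        intro h
        exact hb0 (Nat.eq_zero_of_dvd_of_lt (((xi_prim p).pow_eq_one_iff_dvd b).mp h) hb)
      rw [geom_sum_eq hne1, if_neg hb0]
      have : (xi p ^ b) ^ p = 1 := by
        rw [← pow_mul, mul_comm, pow_mul, (xi_prim p).pow_eq_one, one_pow]
      rw [this, sub_self, zero_div]
  · simp [ha0]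

lemma Emat_zero (p N : ℕ) [NeZero p] : Emat p N 0 0 = 1 := by
  ext x y
  simp only [Emat, Matrix.of_apply, Pi.zero_apply, ZMod.val_zero, pow_zero, one_mul]
  by_cases hxy : x = y
  · subst hxy
    simp [Matrix.one_apply]
  · rw [Matrix.one_apply_ne hxy]
    obtain ⟨i, hi⟩ := Function.ne_iff.mp hxy
    exact Finset.prod_eq_zero (Finset.mem_univ i) (by rw [Matrix.one_apply_ne' (Ne.symm hi)])

lemma Emat_trace (p N : ℕ) [NeZero p] (v w : Fin N → ZMod p) :
    (Emat p N v w).trace = if v = 0 ∧ w = 0 then (p : ℂ) ^ N else 0 := by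
  have h : (Emat p N v w).trace
      = ∏ i, (Tmat p ^ (v i).val * Rmat p ^ (w i).val).trace := by
    rw [Matrix.trace]
    simp only [Matrix.diag, Emat, Matrix.of_apply, Matrix.trace]
    rw [Finset.prod_univ_sum]
    rw [Fintype.piFinset_univ]
  rw [h]
  have hfac : ∀ i : Fin N, (Tmat p ^ (v i).val * Rmat p ^ (w i).val).trace
      = if v i = 0 ∧ w i = 0 then (p : ℂ) else 0 := by
    intro i
    rw [trace_TR p _ _ (ZMod.val_lt _) (ZMod.val_lt _)]
    simp [ZMod.val_eq_zero]
  simp_rw [hfac]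
  by_cases hv : v = 0 ∧ w = 0
  · obtain ⟨hv, hw⟩ := hv
    subst hv; subst hw
    simp
  · rw [if_neg hv]
    rw [not_and_or] at hv
    have : ∃ i : Fin N, ¬(v i = 0 ∧ w i = 0) := by
      rcases hv with hv | hw
      · obtain ⟨i, hi⟩ := Function.ne_iff.mp hv
        exact ⟨i, fun h => hi h.1⟩
      · obtain ⟨i, hi⟩ := Function.ne_iff.mp hw
        exact ⟨i, fun h => hi h.2⟩
    obtain ⟨i, hi⟩ := this
    exact Finset.prod_eq_zero (Finset.mem_univ i) (by rw [if_neg hi])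

lemma sum_mulVec' {n : Type*} [Fintype n] {ι : Type*} (s : Finset ι)
    (g : ι → Matrix n n ℂ) (f : n → ℂ) :
    (∑ A ∈ s, g A).mulVec f = ∑ A ∈ s, (g A).mulVec f := by
  classical
  induction s using Finset.induction_on with
  | empty => simp [Matrix.zero_mulVec]
  | insert _ _ hx ih => simp [Finset.sum_insert hx, Matrix.add_mulVec, ih]

theorem stmt13 (p N r : ℕ) (hp : p.Prime) [NeZero p] (hN : 1 ≤ N)
    (S : Set (Matrix (Fin N → ZMod p) (Fin N → ZMod p) ℂ))
    (hsub : S ⊆ ESet p N)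
    (hone : (1 : Matrix (Fin N → ZMod p) (Fin N → ZMod p) ℂ) ∈ S)
    (hmul : ∀ A ∈ S, ∀ B ∈ S, A * B ∈ S)
    (hinv : ∀ A ∈ S, ∃ B ∈ S, A * B = 1 ∧ B * A = 1)
    (hcomm : ∀ A ∈ S, ∀ B ∈ S, A * B = B * A)
    (hZS : ZSet p N ⊆ S)
    (hcard : S.ncard = p ^ (r + 1))
    (χ : Matrix (Fin N → ZMod p) (Fin N → ZMod p) ℂ → ℂ)
    (hχ : ∀ A ∈ S, ∀ B ∈ S, χ (A * B) = χ A * χ B)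
    (hχξ : χ (xi p • (1 : Matrix (Fin N → ZMod p) (Fin N → ZMod p) ℂ)) = xi p) :
    ∃ Q : Submodule ℂ ((Fin N → ZMod p) → ℂ),
      (Q : Set ((Fin N → ZMod p) → ℂ)) =
        {f | ∀ A ∈ S, A.mulVec f = χ A • f} ∧
      Module.finrank ℂ Q = p ^ (N - r) := by
  classical
  have hp1 : 1 < p := hp.one_lt
  have hξ0 : xi p ≠ 0 := xi_ne_zero p
  -- scalar matrices are in S
  have hscalS : ∀ k : ℕ, (xi p ^ k) • (1 : Matrix (Fin N → ZMod p) (Fin N → ZMod p) ℂ) ∈ S := by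
    intro k
    apply hZS
    refine ⟨(k : ZMod p), ?_⟩
    congr 1
    rw [ZMod.val_natCast]
    conv_lhs => rw [← Nat.div_add_mod k p]
    rw [pow_add, pow_mul, (xi_prim p).pow_eq_one, one_pow, one_mul]
  have hξS : xi p • (1 : Matrix (Fin N → ZMod p) (Fin N → ZMod p) ℂ) ∈ S := by
    have := hscalS 1; rwa [pow_one] at this
  -- χ 1 = 1
  have hχ1 : χ 1 = 1 := by
    have h := hχ _ hξS _ hone
    rw [mul_one, hχξ] at h
    have : xi p * 1 = xi p * χ 1 := by rw [mul_one]; exact h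
    exact (mul_left_cancel₀ hξ0 this).symm
  -- χ never vanishes on S
  have hχne : ∀ A ∈ S, χ A ≠ 0 := by
    intro A hA
    obtain ⟨B, hB, hAB, _⟩ := hinv A hA
    have := hχ A hA B hB
    rw [hAB, hχ1] at this
    exact left_ne_zero_of_mul_eq_one this.symm
  -- χ on scalars
  have hχscal : ∀ k : ℕ, χ ((xi p ^ k) • (1 : Matrix (Fin N → ZMod p) (Fin N → ZMod p) ℂ))
      = xi p ^ k := by
    intro k
    induction k with
    | zero => simpa using hχ1
    | succ k ih =>
      have hsplit : (xi p ^ (k + 1)) • (1 : Matrix (Fin N → ZMod p) (Fin N → ZMod p) ℂ)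
          = (xi p • 1) * ((xi p ^ k) • 1) := by
        rw [Matrix.smul_mul, Matrix.mul_smul, one_mul, smul_smul, pow_succ, mul_comm]
      rw [hsplit, hχ _ hξS _ (hscalS k), hχξ, ih, pow_succ, mul_comm]
  -- finiteness of S
  have hfin : S.Finite := by
    apply Set.finite_of_ncard_ne_zero
    rw [hcard]
    exact (pow_pos hp.pos _).ne'
  set 𝔖 : Finset (Matrix (Fin N → ZMod p) (Fin N → ZMod p) ℂ) := hfin.toFinset with h𝔖
  have hmem𝔖 : ∀ A, A ∈ 𝔖 ↔ A ∈ S := fun A => hfin.mem_toFinset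
  have h𝔖card : 𝔖.card = p ^ (r + 1) := by
    rw [← hcard, Set.ncard_eq_toFinset_card _ hfin]
  -- the averaging projector
  set P0 : Matrix (Fin N → ZMod p) (Fin N → ZMod p) ℂ := ∑ A ∈ 𝔖, (χ A)⁻¹ • A with hP0
  set c : ℂ := ((p : ℂ) ^ (r + 1))⁻¹ with hc
  have hpc0 : ((p : ℂ) ^ (r + 1)) ≠ 0 :=
    pow_ne_zero _ (Nat.cast_ne_zero.mpr (NeZero.ne p))
  set P : Matrix (Fin N → ZMod p) (Fin N → ZMod p) ℂ := c • P0 with hP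
  -- B * P0 = χ B • P0 for B ∈ S
  have hBP0 : ∀ B ∈ S, B * P0 = χ B • P0 := by
    intro B hB
    obtain ⟨B', hB', hBB', hB'B⟩ := hinv B hB
    rw [hP0, Finset.mul_sum, Finset.smul_sum]
    refine Finset.sum_nbij' (fun A => B * A) (fun C => B' * C) ?_ ?_ ?_ ?_ ?_
    · intro A hA; exact (hmem𝔖 _).mpr (hmul _ hB _ ((hmem𝔖 _).mp hA))
    · intro C hC; exact (hmem𝔖 _).mpr (hmul _ hB' _ ((hmem𝔖 _).mp hC))
    · intro A _; show B' * (B * A) = A; rw [← mul_assoc, hB'B, one_mul]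
    · intro C _; show B * (B' * C) = C; rw [← mul_assoc, hBB', one_mul]
    · intro A hA
      have hA' : A ∈ S := (hmem𝔖 _).mp hA
      have hmulχ : χ (B * A) = χ B * χ A := hχ _ hB _ hA'
      rw [mul_smul_comm, smul_smul, hmulχ, mul_inv, ← mul_assoc,
        mul_inv_cancel₀ (hχne B hB), one_mul]
  have hBP : ∀ B ∈ S, B * P = χ B • P := by
    intro B hB
    rw [hP, Matrix.mul_smul, hBP0 B hB, smul_comm]
  -- idempotence
  have hP0P0 : P0 * P0 = ((p : ℂ) ^ (r + 1)) • P0 := by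
    conv_lhs => rw [hP0, Finset.sum_mul]
    have h : ∀ B ∈ 𝔖, ((χ B)⁻¹ • B) * P0 = P0 := by
      intro B hB
      have hB : B ∈ S := (hmem𝔖 _).mp hB
      rw [Matrix.smul_mul, hBP0 B hB, smul_smul, inv_mul_cancel₀ (hχne B hB), one_smul]
    rw [Finset.sum_congr rfl h, Finset.sum_const, h𝔖card]
    rw [← Nat.cast_smul_eq_nsmul ℂ]
    push_cast
    ring_nf
  have hPP : P * P = P := by
    rw [hP, Matrix.smul_mul, Matrix.mul_smul, hP0P0, smul_smul, smul_smul,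
      mul_comm c, mul_assoc, inv_mul_cancel₀ hpc0, mul_one]
  -- eigenvectors are fixed by P
  have hPfix : ∀ f : (Fin N → ZMod p) → ℂ,
      (∀ A ∈ S, A.mulVec f = χ A • f) → P.mulVec f = f := by
    intro f hf
    rw [hP, Matrix.smul_mulVec, hP0, sum_mulVec']
    have h : ∀ A ∈ 𝔖, ((χ A)⁻¹ • A).mulVec f = f := by
      intro A hA
      have hA' : A ∈ S := (hmem𝔖 _).mp hA
      rw [Matrix.smul_mulVec, hf A hA', smul_smul, inv_mul_cancel₀ (hχne A hA'), one_smul]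
    rw [Finset.sum_congr rfl h, Finset.sum_const, h𝔖card, ← Nat.cast_smul_eq_nsmul ℂ,
      smul_smul, hc]
    push_cast
    rw [inv_mul_cancel₀ hpc0, one_smul]
  -- fixed points are eigenvectors
  have hfix : ∀ f : (Fin N → ZMod p) → ℂ, P.mulVec f = f →
      ∀ B ∈ S, B.mulVec f = χ B • f := by
    intro f hf B hB
    conv_lhs => rw [← hf]
    rw [Matrix.mulVec_mulVec, hBP B hB, Matrix.smul_mulVec, hf]
  -- the submodule
  set π : ((Fin N → ZMod p) → ℂ) →ₗ[ℂ] ((Fin N → ZMod p) → ℂ) := P.mulVecLin with hπ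
  have hπapply : ∀ f, π f = P.mulVec f := fun f => rfl
  refine ⟨LinearMap.range π, ?_, ?_⟩
  · ext f
    simp only [SetLike.mem_coe, LinearMap.mem_range, Set.mem_setOf_eq]
    constructor
    · rintro ⟨g, rfl⟩
      intro B hB
      refine hfix _ ?_ B hB
      rw [hπapply, Matrix.mulVec_mulVec, hPP]
    · intro hf
      exact ⟨f, hPfix f hf⟩
  · -- dimension count
    have hproj : LinearMap.IsProj (LinearMap.range π) π := by
      refine ⟨fun x => LinearMap.mem_range_self π x, ?_⟩
      rintro x ⟨y, rfl⟩
      show P.mulVec (P.mulVec y) = P.mulVec y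
      rw [Matrix.mulVec_mulVec, hPP]
    have htr : LinearMap.trace ℂ _ π = (Module.finrank ℂ (LinearMap.range π) : ℂ) :=
      hproj.trace
    have htrP : LinearMap.trace ℂ _ π = P.trace := by
      rw [LinearMap.trace_eq_matrix_trace ℂ (Pi.basisFun ℂ (Fin N → ZMod p)),
        LinearMap.toMatrix_eq_toMatrix']
      congr 1
      rw [hπ, ← Matrix.toLin'_apply']
      exact LinearMap.toMatrix'_toLin' P
    -- compute the trace of P
    have hZg : ∀ k : ZMod p,
        ((xi p ^ k.val) • (1 : Matrix (Fin N → ZMod p) (Fin N → ZMod p) ℂ)) ∈ S := fun k =>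
      hscalS k.val
    set g : ZMod p → Matrix (Fin N → ZMod p) (Fin N → ZMod p) ℂ :=
      fun k => (xi p ^ k.val) • 1 with hg
    have hginj : Function.Injective g := by
      intro k k' h
      have hpt : (g k) (fun _ => 0) (fun _ => 0) = (g k') (fun _ => 0) (fun _ => 0) := by rw [h]
      simp only [hg, Matrix.smul_apply, Matrix.one_apply_eq, smul_eq_mul, mul_one] at hpt
      exact ZMod.val_injective p ((xi_prim p).pow_inj (ZMod.val_lt k) (ZMod.val_lt k') hpt)
    have htrace1 : Matrix.trace (1 : Matrix (Fin N → ZMod p) (Fin N → ZMod p) ℂ)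
        = ((p : ℂ)) ^ N := by
      rw [Matrix.trace_one]
      rw [Fintype.card_fun, ZMod.card, Fintype.card_fin]
      push_cast
      ring
    have hsum : ∑ A ∈ 𝔖, (χ A)⁻¹ * A.trace = (p : ℂ) * (p : ℂ) ^ N := by
      have hsubset : Finset.image g Finset.univ ⊆ 𝔖 := by
        intro A hA
        obtain ⟨k, _, rfl⟩ := Finset.mem_image.mp hA
        exact (hmem𝔖 _).mpr (hZg k)
      rw [← Finset.sum_subset hsubset ?side]
      · rw [Finset.sum_image (fun k _ k' _ h => hginj h)]
        have hterm : ∀ k : ZMod p, (χ (g k))⁻¹ * (g k).trace = (p : ℂ) ^ N := by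
          intro k
          rw [hg]
          simp only
          rw [hχscal k.val, Matrix.trace_smul, htrace1, smul_eq_mul, ← mul_assoc,
            inv_mul_cancel₀ (pow_ne_zero _ hξ0), one_mul]
        rw [Finset.sum_congr rfl fun k _ => hterm k, Finset.sum_const, Finset.card_univ,
          ZMod.card, nsmul_eq_mul]
      case side =>
        intro A hA hA'
        have hAS : A ∈ S := (hmem𝔖 _).mp hA
        obtain ⟨k, v, w, rfl⟩ := hsub hAS
        by_cases hvw : v = 0 ∧ w = 0
        · exfalso
          apply hA'
          apply Finset.mem_image.mpr
          refine ⟨k, Finset.mem_univ _, ?_⟩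
          rw [hg, hvw.1, hvw.2, Emat_zero]
        · rw [Matrix.trace_smul, Emat_trace, if_neg hvw, smul_zero, mul_zero]
    have htrPval : P.trace = c * ((p : ℂ) * (p : ℂ) ^ N) := by
      rw [hP, Matrix.trace_smul, smul_eq_mul, hP0, Matrix.trace_sum]
      congr 1
      rw [← hsum]
      exact Finset.sum_congr rfl fun A _ => by rw [Matrix.trace_smul, smul_eq_mul]
    -- put it together over ℂ and descend to ℕ
    have hdim : (Module.finrank ℂ (LinearMap.range π) : ℂ) * (p : ℂ) ^ (r + 1)
        = (p : ℂ) ^ (N + 1) := by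
      rw [← htr, htrP, htrPval, hc]
      field_simp
      ring
    have hdimℕ : Module.finrank ℂ (LinearMap.range π) * p ^ (r + 1) = p ^ (N + 1) := by
      exact_mod_cast hdim
    have hrN : r ≤ N := by
      have hdvd : p ^ (r + 1) ∣ p ^ (N + 1) :=
        ⟨Module.finrank ℂ (LinearMap.range π), by rw [← hdimℕ, Nat.mul_comm]⟩
      have := (Nat.pow_dvd_pow_iff_le_right hp1).mp hdvd
      omega
    have hsplit : p ^ (N + 1) = p ^ (N - r) * p ^ (r + 1) := by
      rw [← pow_add]
      congr 1
      omega
    rw [hsplit] at hdimℕ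
    exact Nat.eq_of_mul_eq_mul_right (pow_pos hp.pos _) hdimℕ
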